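/- For any sequence (ℓ_s)_{s∈ℤ} of real numbers, let J = {(n + ℓ_s, s) : n, s ∈ ℤ} ⊆ ℝ². Then the translates {T_ε + t : t ∈ J} tile ℝ²; that is, ⋃_{t∈J} (T_ε + t) = ℝ², and for any two distinct t, t' ∈ J the intersection (T_ε + t) ∩ (T_ε + t') has two-dimensional Lebesgue measure zero. In particular T_ε is a self-similar tile. -/

import Mathlib

noncomputable section

/-- `b_j = ε` if `j` is odd and `b_j = 0` if `j` is even. -/
def bshift (ε : ℝ) (j : ℤ) : ℝ := if Odd j then ε else 0

/-- The self-similar set `T_ε` associated with `p` (with `|p| = 2m+1`) and the shift `ε`. -/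
def Tset (p : ℤ) (m : ℕ) (ε : ℝ) : Set (ℝ × ℝ) :=
  { z | ∃ i j : ℕ → ℤ, (∀ k, |i k| ≤ (m : ℤ)) ∧ (∀ k, |j k| ≤ (m : ℤ)) ∧
      z.1 = ∑' k : ℕ, ((p : ℝ) ^ (k + 1))⁻¹ * ((i k : ℝ) + bshift ε (j k)) ∧
      z.2 = ∑' k : ℕ, ((p : ℝ) ^ (k + 1))⁻¹ * (j k : ℝ) }

open Filter Finset MeasureTheory

namespace TileAux

/-- the digit extracted from a remainder `r` -/
def digr (p : ℤ) (m : ℕ) (r : ℝ) : ℤ := min (m : ℤ) ⌊(p : ℝ) * r + 1/2⌋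

/-- one step of the greedy digit algorithm -/
def step (p : ℤ) (m : ℕ) (r : ℝ) : ℝ := (p : ℝ) * r - ((digr p m r : ℤ) : ℝ)

def rem (p : ℤ) (m : ℕ) (y : ℝ) (k : ℕ) : ℝ := (step p m)^[k] y

def dig (p : ℤ) (m : ℕ) (y : ℝ) (k : ℕ) : ℤ := digr p m (rem p m y k)

/-- the exceptional (countable) set of non-uniqueness -/
def Bad (p : ℤ) : Set ℝ := {y : ℝ | ∃ k : ℕ, ∃ z : ℤ, (p : ℝ) ^ (k+1) * y = (z : ℝ) + 1/2}

def gfun (p : ℤ) (m : ℕ) (ε : ℝ) (y : ℝ) : ℝ :=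
  ∑' k : ℕ, ((p : ℝ) ^ (k+1))⁻¹ * bshift ε (dig p m y k)

variable {p : ℤ} {m : ℕ}

lemma habs (hp : |p| = 2 * (m : ℤ) + 1) : |(p : ℝ)| = 2 * (m : ℝ) + 1 := by
  rw [← Int.cast_abs, hp]; push_cast; ring

lemma hpne (hp : |p| = 2 * (m : ℤ) + 1) : (p : ℝ) ≠ 0 := by
  intro h
  have := habs hp
  rw [h, abs_zero] at this
  have : (0:ℝ) ≤ (m:ℝ) := by positivity
  linarith

lemma summable_norm_digits (hm : 1 ≤ m) (hp : |p| = 2 * (m : ℤ) + 1) {c : ℕ → ℝ} {M : ℝ}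
    (hc : ∀ k, |c k| ≤ M) :
    Summable (fun k : ℕ => ‖((p : ℝ) ^ (k+1))⁻¹ * c k‖) := by
  have hm0 : (1:ℝ) ≤ (m:ℝ) := by exact_mod_cast hm
  set r : ℝ := |(p : ℝ)|⁻¹ with hr
  have habs' := habs hp
  have hr0 : 0 ≤ r := by positivity
  have hr1 : r < 1 := by
    rw [hr, habs']
    rw [inv_lt_one_iff₀]; right; linarith
  have hub : ∀ k : ℕ, ‖((p : ℝ) ^ (k+1))⁻¹ * c k‖ ≤ (M * r) * r ^ k := by
    intro k
    have h1 : ‖((p : ℝ) ^ (k+1))⁻¹ * c k‖ = r ^ (k+1) * |c k| := by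
      rw [Real.norm_eq_abs, abs_mul, abs_inv, abs_pow, ← inv_pow]
    rw [h1]
    have h2 : r ^ (k+1) * |c k| ≤ r ^ (k+1) * M :=
      mul_le_mul_of_nonneg_left (hc k) (by positivity)
    calc r ^ (k+1) * |c k| ≤ r ^ (k+1) * M := h2
      _ = (M * r) * r ^ k := by ring
  exact Summable.of_nonneg_of_le (fun k => norm_nonneg _) hub
    (((summable_geometric_of_lt_one hr0 hr1).mul_left (M * r)))

lemma summable_digits (hm : 1 ≤ m) (hp : |p| = 2 * (m : ℤ) + 1) {c : ℕ → ℝ} {M : ℝ}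
    (hc : ∀ k, |c k| ≤ M) :
    Summable (fun k : ℕ => ((p : ℝ) ^ (k+1))⁻¹ * c k) :=
  (summable_norm_digits hm hp hc).of_norm

lemma tsum_digits_bound (hm : 1 ≤ m) (hp : |p| = 2 * (m : ℤ) + 1) {c : ℕ → ℝ} {M : ℝ}
    (hc : ∀ k, |c k| ≤ M) :
    |∑' k : ℕ, ((p : ℝ) ^ (k+1))⁻¹ * c k| ≤ M / (2 * m) := by
  have hm1 : (1:ℝ) ≤ (m:ℝ) := by exact_mod_cast hm
  set r : ℝ := |(p : ℝ)|⁻¹ with hr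
  have habs' := habs hp
  have hr0 : 0 ≤ r := by positivity
  have hr1 : r < 1 := by
    rw [hr, habs']; rw [inv_lt_one_iff₀]; right; linarith
  have hub : ∀ k : ℕ, ‖((p : ℝ) ^ (k+1))⁻¹ * c k‖ ≤ (M * r) * r ^ k := by
    intro k
    have h1 : ‖((p : ℝ) ^ (k+1))⁻¹ * c k‖ = r ^ (k+1) * |c k| := by
      rw [Real.norm_eq_abs, abs_mul, abs_inv, abs_pow, ← inv_pow]
    rw [h1]
    calc r ^ (k+1) * |c k| ≤ r ^ (k+1) * M :=
        mul_le_mul_of_nonneg_left (hc k) (by positivity)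
      _ = (M * r) * r ^ k := by ring
  have hsumg : Summable (fun k : ℕ => (M * r) * r ^ k) :=
    (summable_geometric_of_lt_one hr0 hr1).mul_left (M * r)
  have h2 : ‖∑' k : ℕ, ((p : ℝ) ^ (k+1))⁻¹ * c k‖ ≤ ∑' k : ℕ, (M * r) * r ^ k := by
    refine le_trans (norm_tsum_le_tsum_norm (summable_norm_digits hm hp hc)) ?_
    exact Summable.tsum_le_tsum hub (summable_norm_digits hm hp hc) hsumg
  have h3 : ∑' k : ℕ, (M * r) * r ^ k = (M * r) * (1 - r)⁻¹ := by
    rw [tsum_mul_left, tsum_geometric_of_lt_one hr0 hr1]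
  rw [Real.norm_eq_abs] at h2
  rw [h3] at h2
  have hreq : r = (2 * (m:ℝ) + 1)⁻¹ := by rw [hr, habs']
  have hkey : (M * r) * (1 - r)⁻¹ = M / (2 * m) := by
    rw [hreq]
    have h5 : (2 * (m:ℝ) + 1) ≠ 0 := by linarith
    have h6 : (2 * (m:ℝ)) ≠ 0 := by linarith
    field_simp
    ring
  linarith [h2, hkey.le, hkey.ge]

lemma digr_bound (hp : |p| = 2 * (m : ℤ) + 1) {r : ℝ} (hr : |r| ≤ 1/2) :
    |digr p m r| ≤ (m : ℤ) := by
  have habs' := habs hp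
  set t : ℝ := (p : ℝ) * r with htdef
  have ht : |t| ≤ (m : ℝ) + 1/2 := by
    rw [htdef, abs_mul, habs']
    nlinarith [abs_nonneg r]
  have h1 : -((m:ℝ)) ≤ t + 1/2 := by
    rcases abs_le.1 ht with ⟨h, _⟩; linarith
  have hfl_ge : -(m : ℤ) ≤ ⌊t + 1/2⌋ := by
    rw [Int.le_floor]; push_cast; linarith
  rw [abs_le]
  constructor
  · exact le_min (by omega) hfl_ge
  · exact min_le_left _ _

lemma step_bound (hp : |p| = 2 * (m : ℤ) + 1) {r : ℝ} (hr : |r| ≤ 1/2) :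
    |step p m r| ≤ 1/2 := by
  have habs' := habs hp
  set t : ℝ := (p : ℝ) * r with htdef
  have ht : |t| ≤ (m : ℝ) + 1/2 := by
    rw [htdef, abs_mul, habs']
    nlinarith [abs_nonneg r]
  rcases abs_le.1 ht with ⟨htl, htu⟩
  have hstep : step p m r = t - ((digr p m r : ℤ) : ℝ) := rfl
  rw [hstep]
  by_cases hc : ⌊t + 1/2⌋ ≤ (m : ℤ)
  · have hdig : digr p m r = ⌊t + 1/2⌋ := min_eq_right hc
    rw [hdig]
    have h1 : ((⌊t + 1/2⌋ : ℤ) : ℝ) ≤ t + 1/2 := Int.floor_le _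
    have h2 : t + 1/2 < ((⌊t + 1/2⌋ : ℤ) : ℝ) + 1 := Int.lt_floor_add_one _
    rw [abs_le]; constructor <;> linarith
  · push_neg at hc
    have hdig : digr p m r = (m : ℤ) := min_eq_left hc.le
    rw [hdig]
    have h1 : ((m : ℤ) : ℝ) + 1 ≤ ((⌊t + 1/2⌋ : ℤ) : ℝ) := by exact_mod_cast hc
    have h2 : ((⌊t + 1/2⌋ : ℤ) : ℝ) ≤ t + 1/2 := Int.floor_le _
    push_cast at h1 ⊢
    rw [abs_le]; constructor <;> linarith

lemma rem_zero (y : ℝ) : rem p m y 0 = y := rfl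

lemma rem_succ (y : ℝ) (k : ℕ) :
    rem p m y (k+1) = (p : ℝ) * rem p m y k - ((dig p m y k : ℤ) : ℝ) := by
  rw [rem, Function.iterate_succ_apply']
  rfl

lemma rem_bound (hp : |p| = 2 * (m : ℤ) + 1) {y : ℝ} (hy : |y| ≤ 1/2) (k : ℕ) :
    |rem p m y k| ≤ 1/2 := by
  induction k with
  | zero => exact hy
  | succ k ih =>
    rw [rem_succ]
    exact step_bound hp ih

lemma dig_bound (hp : |p| = 2 * (m : ℤ) + 1) {y : ℝ} (hy : |y| ≤ 1/2) (k : ℕ) :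
    |dig p m y k| ≤ (m : ℤ) :=
  digr_bound hp (rem_bound hp hy k)

lemma partial_sum (hp : |p| = 2 * (m : ℤ) + 1) (y : ℝ) (k : ℕ) :
    ∑ l ∈ Finset.range k, ((p : ℝ) ^ (l+1))⁻¹ * (dig p m y l : ℝ)
      = y - ((p : ℝ) ^ k)⁻¹ * rem p m y k := by
  have hne := hpne hp
  induction k with
  | zero => simp [rem_zero]
  | succ k ih =>
    rw [Finset.sum_range_succ, ih, rem_succ]
    have hpk : (p : ℝ) ^ k ≠ 0 := pow_ne_zero _ hne
    have hpk1 : (p : ℝ) ^ (k+1) ≠ 0 := pow_ne_zero _ hne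
    field_simp
    ring

lemma rep_of_small (hm : 1 ≤ m) (hp : |p| = 2 * (m : ℤ) + 1) {y : ℝ} (hy : |y| ≤ 1/2) :
    y = ∑' k : ℕ, ((p : ℝ) ^ (k+1))⁻¹ * (dig p m y k : ℝ) := by
  have hm1 : (1:ℝ) ≤ (m:ℝ) := by exact_mod_cast hm
  have habs' := habs hp
  have hdb : ∀ k, |((dig p m y k : ℤ) : ℝ)| ≤ (m : ℝ) := by
    intro k
    exact_mod_cast dig_bound hp hy k
  have hnorm := summable_norm_digits hm hp hdb
  have hhs : HasSum (fun k : ℕ => ((p : ℝ) ^ (k+1))⁻¹ * (dig p m y k : ℝ)) y := by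
    rw [hasSum_iff_tendsto_nat_of_summable_norm hnorm]
    have heq : (fun n : ℕ => ∑ i ∈ Finset.range n, ((p : ℝ) ^ (i+1))⁻¹ * (dig p m y i : ℝ))
        = fun n : ℕ => y - ((p : ℝ) ^ n)⁻¹ * rem p m y n := by
      funext n; exact partial_sum hp y n
    rw [heq]
    have h0 : Tendsto (fun n : ℕ => ((p : ℝ) ^ n)⁻¹ * rem p m y n) atTop (nhds 0) := by
      apply squeeze_zero_norm (a := fun n : ℕ => (1/2) * (|(p : ℝ)|⁻¹) ^ n)
      · intro n
        have h1 : ‖((p : ℝ) ^ n)⁻¹ * rem p m y n‖ = (|(p : ℝ)|⁻¹) ^ n * |rem p m y n| := by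
          rw [Real.norm_eq_abs, abs_mul, abs_inv, abs_pow, inv_pow]
        rw [h1]
        have h2 := rem_bound hp hy n
        have h3 : (0:ℝ) ≤ (|(p : ℝ)|⁻¹) ^ n := by positivity
        nlinarith
      · have hr0 : (0:ℝ) ≤ |(p : ℝ)|⁻¹ := by positivity
        have hr1 : |(p : ℝ)|⁻¹ < 1 := by
          rw [habs', inv_lt_one_iff₀]; right; linarith
        have := tendsto_pow_atTop_nhds_zero_of_lt_one hr0 hr1
        have := this.const_mul (1/2 : ℝ)
        simpa using this
    have := (tendsto_const_nhds (x := y) (f := atTop (α := ℕ))).sub h0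
    simpa using this
  exact hhs.tsum_eq.symm

lemma bad_null (hp : |p| = 2 * (m : ℤ) + 1) : volume (Bad p) = 0 := by
  have hne := hpne hp
  have hc : (Bad p).Countable := by
    apply Set.Countable.mono ?_ (Set.countable_range
      (fun kz : ℕ × ℤ => ((kz.2 : ℝ) + 1/2) / (p : ℝ) ^ (kz.1 + 1)))
    rintro y ⟨k, z, hz⟩
    exact ⟨(k, z), by
      simp only
      rw [div_eq_iff (pow_ne_zero _ hne), ← hz]; ring⟩
  exact hc.measure_zero _

lemma bshift_abs (ε : ℝ) (z : ℤ) : |bshift ε z| ≤ |ε| := by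
  unfold bshift
  split_ifs
  · exact le_refl _
  · simp

lemma rep_unique (hm : 1 ≤ m) (hp : |p| = 2 * (m : ℤ) + 1) {j j' : ℕ → ℤ}
    (hj : ∀ k, |j k| ≤ (m : ℤ)) (hj' : ∀ k, |j' k| ≤ (m : ℤ)) {y : ℝ}
    (h1 : y = ∑' k : ℕ, ((p : ℝ) ^ (k+1))⁻¹ * (j k : ℝ))
    (h2 : y = ∑' k : ℕ, ((p : ℝ) ^ (k+1))⁻¹ * (j' k : ℝ))
    (hB : y ∉ Bad p) : j = j' := by
  classical
  by_contra hnefn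
  have hex : ∃ k, j k ≠ j' k := Function.ne_iff.1 hnefn
  set K := Nat.find hex with hKdef
  have hKne : j K ≠ j' K := Nat.find_spec hex
  have hminlt : ∀ l, l < K → j l = j' l := by
    intro l hl
    by_contra h
    exact Nat.find_min hex hl h
  have hm1 : (1:ℝ) ≤ (m:ℝ) := by exact_mod_cast hm
  have hne0 := hpne hp
  have hjr : ∀ k, |((j k : ℤ):ℝ)| ≤ (m:ℝ) := fun k => by exact_mod_cast hj k
  have hjr' : ∀ k, |((j' k : ℤ):ℝ)| ≤ (m:ℝ) := fun k => by exact_mod_cast hj' k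
  have S1 : Summable (fun k : ℕ => ((p:ℝ)^(k+1))⁻¹ * (j k : ℝ)) := summable_digits hm hp hjr
  have S2 : Summable (fun k : ℕ => ((p:ℝ)^(k+1))⁻¹ * (j' k : ℝ)) := summable_digits hm hp hjr'
  have hsplit1 := Summable.sum_add_tsum_nat_add (f := fun k : ℕ => ((p:ℝ)^(k+1))⁻¹ * (j k : ℝ)) (K+1) S1
  have hsplit2 := Summable.sum_add_tsum_nat_add (f := fun k : ℕ => ((p:ℝ)^(k+1))⁻¹ * (j' k : ℝ)) (K+1) S2
  set Ys : ℝ := ∑' i : ℕ, ((p:ℝ)^(i+1))⁻¹ * (j (i + (K+1)) : ℝ) with hYsdef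
  set Ys' : ℝ := ∑' i : ℕ, ((p:ℝ)^(i+1))⁻¹ * (j' (i + (K+1)) : ℝ) with hYsdef'
  have hexp : ∀ i : ℕ, ((p:ℝ)^(i + (K+1) + 1))⁻¹ = ((p:ℝ)^(K+1))⁻¹ * ((p:ℝ)^(i+1))⁻¹ := by
    intro i
    rw [show i + (K+1) + 1 = (K+1) + (i+1) from by omega, pow_add, mul_inv]
  have htail1 : (∑' i : ℕ, ((p:ℝ)^(i + (K+1) + 1))⁻¹ * (j (i + (K+1)) : ℝ))
      = ((p:ℝ)^(K+1))⁻¹ * Ys := by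
    rw [hYsdef, ← tsum_mul_left]
    exact tsum_congr fun i => by rw [hexp i]; ring
  have htail2 : (∑' i : ℕ, ((p:ℝ)^(i + (K+1) + 1))⁻¹ * (j' (i + (K+1)) : ℝ))
      = ((p:ℝ)^(K+1))⁻¹ * Ys' := by
    rw [hYsdef', ← tsum_mul_left]
    exact tsum_congr fun i => by rw [hexp i]; ring
  have hmne : (m:ℝ) ≠ 0 := by linarith
  have hhalf : (m:ℝ)/(2*m) = 1/2 := by field_simp
  have hYsb : |Ys| ≤ 1/2 := by
    have := tsum_digits_bound hm hp (fun i => hjr (i + (K+1)))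
    rw [hhalf] at this
    exact this
  have hYsb' : |Ys'| ≤ 1/2 := by
    have := tsum_digits_bound hm hp (fun i => hjr' (i + (K+1)))
    rw [hhalf] at this
    exact this
  set Q : ℝ := ∑ l ∈ Finset.range K, ((p:ℝ)^(l+1))⁻¹ * (j l : ℝ) with hQdef
  have hPQ : ∑ l ∈ Finset.range (K+1), ((p:ℝ)^(l+1))⁻¹ * (j l : ℝ)
      = Q + ((p:ℝ)^(K+1))⁻¹ * (j K : ℝ) := Finset.sum_range_succ _ _
  have hQ' : ∑ l ∈ Finset.range K, ((p:ℝ)^(l+1))⁻¹ * (j' l : ℝ) = Q := by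
    rw [hQdef]
    exact Finset.sum_congr rfl fun l hl => by rw [hminlt l (Finset.mem_range.1 hl)]
  have hPQ' : ∑ l ∈ Finset.range (K+1), ((p:ℝ)^(l+1))⁻¹ * (j' l : ℝ)
      = Q + ((p:ℝ)^(K+1))⁻¹ * (j' K : ℝ) := by
    rw [Finset.sum_range_succ, hQ']
  have hy1 : y = Q + ((p:ℝ)^(K+1))⁻¹ * (j K : ℝ) + ((p:ℝ)^(K+1))⁻¹ * Ys := by
    rw [h1, ← hsplit1, hPQ, htail1]
  have hy2 : y = Q + ((p:ℝ)^(K+1))⁻¹ * (j' K : ℝ) + ((p:ℝ)^(K+1))⁻¹ * Ys' := by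
    rw [h2, ← hsplit2, hPQ', htail2]
  have hinv : ((p:ℝ)^(K+1))⁻¹ ≠ 0 := inv_ne_zero (pow_ne_zero _ hne0)
  have hcancel : (j K : ℝ) + Ys = (j' K : ℝ) + Ys' := by
    apply mul_left_cancel₀ hinv
    have h := hy1.symm.trans hy2
    ring_nf at h ⊢
    linarith
  have habs1 : (1:ℝ) ≤ |(j K : ℝ) - (j' K : ℝ)| := by
    have h0 : (1:ℤ) ≤ |j K - j' K| := Int.one_le_abs (sub_ne_zero.2 hKne)
    have h1' : ((1:ℤ):ℝ) ≤ ((|j K - j' K| : ℤ) : ℝ) := by exact_mod_cast h0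
    rw [Int.cast_abs] at h1'
    push_cast at h1'
    linarith [h1']
  have hdiff : (j K : ℝ) - (j' K : ℝ) = Ys' - Ys := by linarith [hcancel]
  have htri : |Ys' - Ys| ≤ |Ys'| + |Ys| := by
    rw [sub_eq_add_neg]
    exact (abs_add_le _ _).trans (by rw [abs_neg])
  have hYs_eq : |Ys| = 1/2 := by
    rw [hdiff] at habs1
    exact le_antisymm hYsb (by linarith)
  set z0 : ℤ := ∑ l ∈ Finset.range (K+1), p^(K-l) * j l with hz0def
  have hz0 : ((z0 : ℤ) : ℝ)
      = (p:ℝ)^(K+1) * ∑ l ∈ Finset.range (K+1), ((p:ℝ)^(l+1))⁻¹ * (j l : ℝ) := by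
    rw [hz0def]
    push_cast
    rw [Finset.mul_sum]
    refine Finset.sum_congr rfl fun l hl => ?_
    have hlK : l + 1 ≤ K + 1 := Nat.succ_le_succ (Nat.lt_succ_iff.1 (Finset.mem_range.1 hl))
    have hps := pow_sub₀ (p:ℝ) hne0 hlK
    have he : K + 1 - (l+1) = K - l := by omega
    rw [he] at hps
    rw [hps]
    ring
  have hyP : y = (∑ l ∈ Finset.range (K+1), ((p:ℝ)^(l+1))⁻¹ * (j l : ℝ))
      + ((p:ℝ)^(K+1))⁻¹ * Ys := by
    rw [hPQ]; exact hy1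
  have hpk : (p:ℝ)^(K+1) ≠ 0 := pow_ne_zero _ hne0
  apply hB
  rcases (abs_eq (by norm_num : (0:ℝ) ≤ 1/2)).1 hYs_eq with hv | hv
  · refine ⟨K, z0, ?_⟩
    rw [hyP, hv, mul_add, ← hz0]
    congr 1
    field_simp
  · refine ⟨K, z0 - 1, ?_⟩
    rw [hyP, hv, mul_add, ← hz0]
    push_cast
    field_simp
    ring

lemma measurable_digr : Measurable (digr p m) := by
  unfold digr
  have h1 : Measurable fun r : ℝ => (p:ℝ) * r + 1/2 :=
    (measurable_id.const_mul _).add_const _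
  exact measurable_const.min (Int.measurable_floor.comp h1)

lemma measurable_rem (k : ℕ) : Measurable (fun y : ℝ => rem p m y k) := by
  induction k with
  | zero => exact measurable_id
  | succ k ih =>
    have hstep : Measurable (step p m) := by
      unfold step
      exact (measurable_id.const_mul _).sub
        ((measurable_from_top (f := (Int.cast : ℤ → ℝ))).comp measurable_digr)
    have heq : (fun y : ℝ => rem p m y (k+1)) = step p m ∘ (fun y => rem p m y k) := by
      funext y
      rw [rem, Function.iterate_succ_apply']
      rfl
    rw [heq]
    exact hstep.comp ih

lemma measurable_dig (k : ℕ) : Measurable (fun y : ℝ => dig p m y k) :=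
  measurable_digr.comp (measurable_rem k)

lemma measurable_gfun (hm : 1 ≤ m) (hp : |p| = 2 * (m : ℤ) + 1) (ε : ℝ) :
    Measurable (gfun p m ε) := by
  have hm1 : (1:ℝ) ≤ (m:ℝ) := by exact_mod_cast hm
  apply measurable_of_tendsto_metrizable
    (f := fun n (y : ℝ) => ∑ k ∈ Finset.range n, ((p:ℝ)^(k+1))⁻¹ * bshift ε (dig p m y k))
  · intro n
    exact Finset.measurable_sum _ fun k _ =>
      (((measurable_from_top (f := bshift ε)).comp (measurable_dig k)).const_mul _)
  · rw [tendsto_pi_nhds]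
    intro y
    have hsum : Summable (fun k : ℕ => ((p:ℝ)^(k+1))⁻¹ * bshift ε (dig p m y k)) :=
      summable_digits hm hp (M := |ε|) (fun k => bshift_abs ε _)
    exact hsum.hasSum.tendsto_sum_nat

lemma graph_null {f : ℝ → ℝ} (hf : Measurable f) :
    volume {q : ℝ × ℝ | q.1 = f q.2} = 0 := by
  have hS : MeasurableSet {q : ℝ × ℝ | q.1 = f q.2} :=
    measurableSet_eq_fun measurable_fst (hf.comp measurable_snd)
  rw [MeasureTheory.Measure.volume_eq_prod, Measure.prod_apply_symm hS]
  have hsec : ∀ y : ℝ, ((fun x : ℝ => (x, y)) ⁻¹' {q : ℝ × ℝ | q.1 = f q.2}) = {f y} := by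
    intro y
    ext x
    simp [Set.mem_preimage]
  simp only [hsec, measure_singleton]
  simp

lemma mem_unpack (hm : 1 ≤ m) (hp : |p| = 2 * (m : ℤ) + 1) {ε : ℝ} {t z : ℝ × ℝ}
    (h : z ∈ (· + t) '' Tset p m ε) :
    ∃ i j : ℕ → ℤ, (∀ k, |i k| ≤ (m : ℤ)) ∧ (∀ k, |j k| ≤ (m : ℤ)) ∧
      z.1 = (∑' k : ℕ, ((p : ℝ) ^ (k+1))⁻¹ * (i k : ℝ))
            + (∑' k : ℕ, ((p : ℝ) ^ (k+1))⁻¹ * bshift ε (j k)) + t.1 ∧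
      z.2 = (∑' k : ℕ, ((p : ℝ) ^ (k+1))⁻¹ * (j k : ℝ)) + t.2 := by
  obtain ⟨w, ⟨i, j, hi, hj, h1, h2⟩, hwz⟩ := h
  refine ⟨i, j, hi, hj, ?_, ?_⟩
  · have hz1 : z.1 = w.1 + t.1 := by rw [← hwz]; rfl
    rw [hz1, h1]
    have hsplit : (∑' k : ℕ, ((p:ℝ)^(k+1))⁻¹ * ((i k : ℝ) + bshift ε (j k)))
        = (∑' k : ℕ, ((p:ℝ)^(k+1))⁻¹ * (i k : ℝ))
          + ∑' k : ℕ, ((p:ℝ)^(k+1))⁻¹ * bshift ε (j k) := by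
      rw [← Summable.tsum_add (summable_digits hm hp (M := (m:ℝ)) fun k => by exact_mod_cast hi k)
            (summable_digits hm hp (M := |ε|) fun k => bshift_abs ε _)]
      exact tsum_congr fun k => by ring
    rw [hsplit]
  · have hz2 : z.2 = w.2 + t.2 := by rw [← hwz]; rfl
    rw [hz2, h2]


end TileAux

theorem stmt0 (p : ℤ) (m : ℕ) (hm : 1 ≤ m) (hp : |p| = 2 * (m : ℤ) + 1) (ε : ℝ)
    (ℓ : ℤ → ℝ) :
    (⋃ t ∈ {t : ℝ × ℝ | ∃ n s : ℤ, t = ((n : ℝ) + ℓ s, (s : ℝ))},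
        (· + t) '' Tset p m ε) = Set.univ ∧
    ∀ t ∈ {t : ℝ × ℝ | ∃ n s : ℤ, t = ((n : ℝ) + ℓ s, (s : ℝ))},
      ∀ t' ∈ {t : ℝ × ℝ | ∃ n s : ℤ, t = ((n : ℝ) + ℓ s, (s : ℝ))}, t ≠ t' →
        MeasureTheory.volume
          (((· + t) '' Tset p m ε) ∩ ((· + t') '' Tset p m ε)) = 0 := by
  classical
  have hm1 : (1:ℝ) ≤ (m:ℝ) := by exact_mod_cast hm
  have hmne : (m:ℝ) ≠ 0 := by linarith
  have hhalf : (m:ℝ)/(2*m) = 1/2 := by field_simp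
  constructor
  · apply Set.eq_univ_of_forall
    rintro ⟨x, y⟩
    set s : ℤ := ⌊y + 1/2⌋ with hs
    have hy0 : |y - (s:ℝ)| ≤ 1/2 := by
      have h1 : ((s:ℤ):ℝ) ≤ y + 1/2 := Int.floor_le _
      have h2 : y + 1/2 < ((s:ℤ):ℝ) + 1 := Int.lt_floor_add_one _
      rw [abs_le]; constructor <;> linarith
    set C : ℝ := TileAux.gfun p m ε (y - (s:ℝ)) with hC
    set n : ℤ := ⌊x - ℓ s - C + 1/2⌋ with hn
    have ha : |x - ℓ s - C - (n:ℝ)| ≤ 1/2 := by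
      have h1 : ((n:ℤ):ℝ) ≤ x - ℓ s - C + 1/2 := Int.floor_le _
      have h2 : x - ℓ s - C + 1/2 < ((n:ℤ):ℝ) + 1 := Int.lt_floor_add_one _
      rw [abs_le]; constructor <;> linarith
    apply Set.mem_iUnion₂.2
    refine ⟨((n:ℝ) + ℓ s, (s:ℝ)), ⟨n, s, rfl⟩, ?_⟩
    refine ⟨(x - ((n:ℝ) + ℓ s), y - (s:ℝ)),
      ⟨TileAux.dig p m (x - ℓ s - C - (n:ℝ)), TileAux.dig p m (y - (s:ℝ)),
        fun k => TileAux.dig_bound hp ha k, fun k => TileAux.dig_bound hp hy0 k, ?_, ?_⟩, ?_⟩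
    · show x - ((n:ℝ) + ℓ s) = ∑' k : ℕ, ((p:ℝ)^(k+1))⁻¹ *
        ((TileAux.dig p m (x - ℓ s - C - (n:ℝ)) k : ℝ)
          + bshift ε (TileAux.dig p m (y - (s:ℝ)) k))
      have hsplit : (∑' k : ℕ, ((p:ℝ)^(k+1))⁻¹ *
          ((TileAux.dig p m (x - ℓ s - C - (n:ℝ)) k : ℝ)
            + bshift ε (TileAux.dig p m (y - (s:ℝ)) k)))
          = (∑' k : ℕ, ((p:ℝ)^(k+1))⁻¹ * (TileAux.dig p m (x - ℓ s - C - (n:ℝ)) k : ℝ))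
            + ∑' k : ℕ, ((p:ℝ)^(k+1))⁻¹ * bshift ε (TileAux.dig p m (y - (s:ℝ)) k) := by
        rw [← Summable.tsum_add (TileAux.summable_digits hm hp (M := (m:ℝ))
              (fun k => by exact_mod_cast TileAux.dig_bound hp ha k))
            (TileAux.summable_digits hm hp (M := |ε|) (fun k => TileAux.bshift_abs ε _))]
        exact tsum_congr fun k => by ring
      rw [hsplit, ← TileAux.rep_of_small hm hp ha]
      have hCdef : (∑' k : ℕ, ((p:ℝ)^(k+1))⁻¹
          * bshift ε (TileAux.dig p m (y - (s:ℝ)) k)) = C := by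
        rw [hC]; rfl
      rw [hCdef]
      ring
    · exact TileAux.rep_of_small hm hp hy0
    · refine Prod.ext ?_ ?_
      · show x - ((n:ℝ) + ℓ s) + ((n:ℝ) + ℓ s) = x
        ring
      · show y - (s:ℝ) + (s:ℝ) = y
        ring
  · rintro t ⟨n, s, rfl⟩ t' ⟨n', s', rfl⟩ hne
    by_cases hss : (s:ℝ) = (s':ℝ)
    · have hss' : s = s' := by exact_mod_cast hss
      subst hss'
      have hnn : n ≠ n' := by
        intro h
        exact hne (by rw [h])
      set G : ℝ → ℝ :=
        fun y => ((min n n' : ℤ):ℝ) + ℓ s + 1/2 + TileAux.gfun p m ε (y - (s:ℝ)) with hG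
      refine measure_mono_null
        (t := (Set.univ ×ˢ {y : ℝ | y - (s:ℝ) ∈ TileAux.Bad p}) ∪ {q : ℝ × ℝ | q.1 = G q.2})
        ?_ (measure_union_null ?_ ?_)
      rotate_left
      · show volume (Set.univ ×ˢ {y : ℝ | y - (s:ℝ) ∈ TileAux.Bad p}) = 0
        rw [MeasureTheory.Measure.volume_eq_prod, MeasureTheory.Measure.prod_prod]
        have hB0 : volume {y : ℝ | y - (s:ℝ) ∈ TileAux.Bad p} = 0 := by
          have he : {y : ℝ | y - (s:ℝ) ∈ TileAux.Bad p}
              = (fun y : ℝ => y + (-(s:ℝ))) ⁻¹' TileAux.Bad p := by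
            ext y; simp [sub_eq_add_neg]
          rw [he, measure_preimage_add_right volume (-(s:ℝ)) _]
          exact TileAux.bad_null hp
        rw [hB0, mul_zero]
      · show volume {q : ℝ × ℝ | q.1 = G q.2} = 0
        apply TileAux.graph_null
        rw [hG]
        exact ((TileAux.measurable_gfun hm hp ε).comp (measurable_id.sub_const _)).const_add _
      · rintro ⟨x, y⟩ ⟨hqA, hqB⟩
        obtain ⟨i, j, hi, hj, hx1, hy1⟩ := TileAux.mem_unpack hm hp hqA
        obtain ⟨i', j', hi', hj', hx2, hy2⟩ := TileAux.mem_unpack hm hp hqB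
        dsimp only at hx1 hy1 hx2 hy2
        by_cases hbad : y - (s:ℝ) ∈ TileAux.Bad p
        · exact Or.inl ⟨Set.mem_univ _, hbad⟩
        · right
          have hYrep : y - (s:ℝ) = ∑' k : ℕ, ((p:ℝ)^(k+1))⁻¹ * (j k : ℝ) := by
            linarith [hy1]
          have hYrep' : y - (s:ℝ) = ∑' k : ℕ, ((p:ℝ)^(k+1))⁻¹ * (j' k : ℝ) := by
            linarith [hy2]
          have hYb : |y - (s:ℝ)| ≤ 1/2 := by
            rw [hYrep]
            have := TileAux.tsum_digits_bound hm hp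
              (fun k => (by exact_mod_cast hj k : |((j k : ℤ):ℝ)| ≤ (m:ℝ)))
            rw [hhalf] at this
            exact this
          have hdigrep := TileAux.rep_of_small hm hp hYb
          have hjd : j = TileAux.dig p m (y - (s:ℝ)) :=
            TileAux.rep_unique hm hp hj (fun k => TileAux.dig_bound hp hYb k) hYrep hdigrep hbad
          have hjd' : j' = TileAux.dig p m (y - (s:ℝ)) :=
            TileAux.rep_unique hm hp hj' (fun k => TileAux.dig_bound hp hYb k) hYrep' hdigrep hbad
          have hCeq : (∑' k : ℕ, ((p:ℝ)^(k+1))⁻¹ * bshift ε (j k))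
              = TileAux.gfun p m ε (y - (s:ℝ)) := by rw [hjd]; rfl
          have hCeq' : (∑' k : ℕ, ((p:ℝ)^(k+1))⁻¹ * bshift ε (j' k))
              = TileAux.gfun p m ε (y - (s:ℝ)) := by rw [hjd']; rfl
          rw [hCeq] at hx1
          rw [hCeq'] at hx2
          set A : ℝ := ∑' k : ℕ, ((p:ℝ)^(k+1))⁻¹ * (i k : ℝ) with hA
          set A' : ℝ := ∑' k : ℕ, ((p:ℝ)^(k+1))⁻¹ * (i' k : ℝ) with hA'
          have hAb : |A| ≤ 1/2 := by
            rw [hA]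
            have := TileAux.tsum_digits_bound hm hp
              (fun k => (by exact_mod_cast hi k : |((i k : ℤ):ℝ)| ≤ (m:ℝ)))
            rw [hhalf] at this; exact this
          have hAb' : |A'| ≤ 1/2 := by
            rw [hA']
            have := TileAux.tsum_digits_bound hm hp
              (fun k => (by exact_mod_cast hi' k : |((i' k : ℤ):ℝ)| ≤ (m:ℝ)))
            rw [hhalf] at this; exact this
          have hAA' : A - A' = (n':ℝ) - (n:ℝ) := by linarith [hx1, hx2]
          have h1le : (1:ℝ) ≤ |(n':ℝ) - (n:ℝ)| := by
            have h0 : (1:ℤ) ≤ |n' - n| := Int.one_le_abs (sub_ne_zero.2 (Ne.symm hnn))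
            have h1' : ((1:ℤ):ℝ) ≤ ((|n' - n| : ℤ):ℝ) := by exact_mod_cast h0
            rw [Int.cast_abs] at h1'
            push_cast at h1'
            linarith
          have htri : |A - A'| ≤ |A| + |A'| := by
            rw [sub_eq_add_neg]; exact (abs_add_le _ _).trans (by rw [abs_neg])
          have habs_eq : |(n':ℝ) - (n:ℝ)| = 1 := by
            rw [← hAA'] at h1le ⊢
            exact le_antisymm (by linarith) h1le
          rcases (abs_eq (by norm_num : (0:ℝ) ≤ 1)).1 habs_eq with hv | hv
          · have hle : n ≤ n' := by
              have : (n:ℝ) ≤ (n':ℝ) := by linarith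
              exact_mod_cast this
            have hminv : min n n' = n := min_eq_left hle
            have hA12 : A = 1/2 := by
              rcases abs_le.1 hAb with ⟨_, h⟩
              rcases abs_le.1 hAb' with ⟨h', _⟩
              linarith [hAA']
            show x = G y
            rw [hG]
            dsimp only
            rw [hminv]
            linarith [hx1]
          · have hle : n' ≤ n := by
              have : (n':ℝ) ≤ (n:ℝ) := by linarith
              exact_mod_cast this
            have hminv : min n n' = n' := min_eq_right hle
            have hA12 : A' = 1/2 := by
              rcases abs_le.1 hAb with ⟨h', _⟩
              rcases abs_le.1 hAb' with ⟨_, h⟩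
              linarith [hAA']
            show x = G y
            rw [hG]
            dsimp only
            rw [hminv]
            linarith [hx2]
    · have hsint : s ≠ s' := fun h => hss (by rw [h])
      refine measure_mono_null
        (?_ : _ ⊆ Set.univ ×ˢ ({((s:ℝ)+(s':ℝ))/2} : Set ℝ)) ?_
      · rintro ⟨x, y⟩ ⟨hqA, hqB⟩
        obtain ⟨i, j, hi, hj, hx1, hy1⟩ := TileAux.mem_unpack hm hp hqA
        obtain ⟨i', j', hi', hj', hx2, hy2⟩ := TileAux.mem_unpack hm hp hqB
        dsimp only at hx1 hy1 hx2 hy2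
        set Y : ℝ := ∑' k : ℕ, ((p:ℝ)^(k+1))⁻¹ * (j k : ℝ) with hY
        set Y' : ℝ := ∑' k : ℕ, ((p:ℝ)^(k+1))⁻¹ * (j' k : ℝ) with hY'
        have hYb : |Y| ≤ 1/2 := by
          rw [hY]
          have := TileAux.tsum_digits_bound hm hp
            (fun k => (by exact_mod_cast hj k : |((j k : ℤ):ℝ)| ≤ (m:ℝ)))
          rw [hhalf] at this; exact this
        have hYb' : |Y'| ≤ 1/2 := by
          rw [hY']
          have := TileAux.tsum_digits_bound hm hp
            (fun k => (by exact_mod_cast hj' k : |((j' k : ℤ):ℝ)| ≤ (m:ℝ)))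
          rw [hhalf] at this; exact this
        have hd : (s:ℝ) - (s':ℝ) = Y' - Y := by linarith [hy1, hy2]
        have h1le : (1:ℝ) ≤ |(s:ℝ) - (s':ℝ)| := by
          have h0 : (1:ℤ) ≤ |s - s'| := Int.one_le_abs (sub_ne_zero.2 hsint)
          have h1' : ((1:ℤ):ℝ) ≤ ((|s - s'| : ℤ):ℝ) := by exact_mod_cast h0
          rw [Int.cast_abs] at h1'
          push_cast at h1'
          linarith
        have htri : |Y' - Y| ≤ |Y'| + |Y| := by
          rw [sub_eq_add_neg]; exact (abs_add_le _ _).trans (by rw [abs_neg])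
        refine ⟨Set.mem_univ _, ?_⟩
        simp only [Set.mem_singleton_iff]
        show y = ((s:ℝ)+(s':ℝ))/2
        have habs_eq : |(s:ℝ) - (s':ℝ)| = 1 := by
          rw [hd] at h1le ⊢
          exact le_antisymm (by linarith) h1le
        rcases (abs_eq (by norm_num : (0:ℝ) ≤ 1)).1 habs_eq with hv | hv
        · have hhalfY : Y' = 1/2 := by
            rcases abs_le.1 hYb' with ⟨_, h⟩
            rcases abs_le.1 hYb with ⟨h', _⟩
            linarith [hd]
          linarith [hy2, hv, hhalfY]
        · have hhalfY : Y = 1/2 := by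
            rcases abs_le.1 hYb with ⟨_, h⟩
            rcases abs_le.1 hYb' with ⟨h', _⟩
            linarith [hd]
          linarith [hy1, hv, hhalfY]
      · rw [MeasureTheory.Measure.volume_eq_prod, MeasureTheory.Measure.prod_prod,
          measure_singleton, mul_zero]
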